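/- Let 0 < c ≤ 1 and 0 < ω < c(c+1)/2, Q(x) = √2/cosh(x). There exists μ > 0 such that for all z ∈ H¹(ℝ, ℝ), ∫ (|z'|² + c²|z|² - ωQ²|z|²) dx ≥ μ ‖z‖_{H¹}². -/

import Mathlib

open Real MeasureTheory

noncomputable def Q (x : ℝ) : ℝ := Real.sqrt 2 / Real.cosh x

lemma my_hasDerivAt_tanh (x : ℝ) : HasDerivAt Real.tanh (1 / Real.cosh x ^ 2) x := by
  have h : HasDerivAt (fun y => Real.sinh y / Real.cosh y)
      ((Real.cosh x * Real.cosh x - Real.sinh x * Real.sinh x) / Real.cosh x ^ 2) x :=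
    (Real.hasDerivAt_sinh x).div (Real.hasDerivAt_cosh x) (Real.cosh_pos x).ne'
  have hfun : Real.tanh = fun y => Real.sinh y / Real.cosh y :=
    funext Real.tanh_eq_sinh_div_cosh
  rw [hfun]
  convert h using 2
  have := Real.cosh_sq_sub_sinh_sq x
  nlinarith [this]

lemma my_abs_tanh_le_one (x : ℝ) : |Real.tanh x| ≤ 1 := by
  have h1 : Real.cosh x - Real.sinh x = Real.exp (-x) := Real.cosh_sub_sinh x
  have h2 : Real.cosh x + Real.sinh x = Real.exp x := Real.cosh_add_sinh x
  have hc : 0 < Real.cosh x := Real.cosh_pos x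
  rw [Real.tanh_eq_sinh_div_cosh, abs_div, abs_of_pos hc, div_le_one hc, abs_le]
  constructor <;> nlinarith [Real.exp_pos (-x), Real.exp_pos x]

lemma my_tanh_sq (x : ℝ) : Real.tanh x ^ 2 = 1 - 1 / Real.cosh x ^ 2 := by
  have hc : Real.cosh x ^ 2 ≠ 0 := by positivity
  rw [Real.tanh_eq_sinh_div_cosh, div_pow]
  field_simp
  nlinarith [Real.cosh_sq_sub_sinh_sq x]

theorem stmt12 (c ω : ℝ) (hc : 0 < c) (hc1 : c ≤ 1) (hω : 0 < ω)
    (hω' : ω < c * (c + 1) / 2) :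
    ∃ μ : ℝ, 0 < μ ∧
      ∀ z : ℝ → ℝ, Differentiable ℝ z →
        MemLp z 2 (volume : Measure ℝ) →
        MemLp (deriv z) 2 (volume : Measure ℝ) →
        (∫ x : ℝ, ((deriv z x) ^ 2 + c ^ 2 * (z x) ^ 2 - ω * (Q x) ^ 2 * (z x) ^ 2))
          ≥ μ * ∫ x : ℝ, ((z x) ^ 2 + (deriv z x) ^ 2) := by
  have hc1' : 0 < c + 1 := by linarith
  have hK : 0 < c * (c + 1) - 2 * ω := by linarith
  refine ⟨(c * (c + 1) - 2 * ω) * c / (c + 1), by positivity, ?_⟩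
  intro z hz hz2 hdz2
  -- basic measurability
  have hzc : Continuous z := hz.continuous
  have hdzm : AEStronglyMeasurable (deriv z) volume :=
    (measurable_deriv z).aestronglyMeasurable
  have hcosh2 : ∀ x : ℝ, (1:ℝ) ≤ Real.cosh x ^ 2 := fun x => by
    nlinarith [Real.one_le_cosh x]
  -- integrability of the basic pieces
  have hB : Integrable (fun x => z x ^ 2) := hz2.integrable_sq
  have hA : Integrable (fun x => deriv z x ^ 2) := hdz2.integrable_sq
  have hSm : AEStronglyMeasurable (fun x => z x ^ 2 / Real.cosh x ^ 2) volume :=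
    ((hzc.pow 2).div (Real.continuous_cosh.pow 2)
      (fun x => pow_ne_zero 2 (Real.cosh_pos x).ne')).aestronglyMeasurable
  have hS : Integrable (fun x => z x ^ 2 / Real.cosh x ^ 2) := by
    refine hB.mono hSm (Filter.Eventually.of_forall fun x => ?_)
    have h1 := hcosh2 x
    rw [Real.norm_eq_abs, Real.norm_eq_abs, abs_of_nonneg (by positivity),
      abs_of_nonneg (by positivity)]
    rw [div_le_iff₀ (by positivity)]
    nlinarith [sq_nonneg (z x)]
  have hT : Integrable (fun x => Real.tanh x * (2 * z x * deriv z x)) := by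
    refine (hB.add hA).mono ?_ (Filter.Eventually.of_forall fun x => ?_)
    · exact ((Real.continuous_sinh.div Real.continuous_cosh
        (fun x => (Real.cosh_pos x).ne')).congr
        (fun y => (Real.tanh_eq_sinh_div_cosh y).symm)).aestronglyMeasurable.mul
        ((hzc.aestronglyMeasurable.const_mul 2).mul hdzm)
    · simp only [Pi.add_apply, Real.norm_eq_abs]
      rw [abs_mul, abs_of_nonneg (by positivity : (0:ℝ) ≤ z x ^ 2 + deriv z x ^ 2)]
      have h1 := my_abs_tanh_le_one x
      have h2 : |2 * z x * deriv z x| ≤ z x ^ 2 + deriv z x ^ 2 := by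
        rw [abs_le]; constructor <;> nlinarith [sq_nonneg (z x + deriv z x),
          sq_nonneg (z x - deriv z x)]
      calc |Real.tanh x| * |2 * z x * deriv z x| ≤ 1 * |2 * z x * deriv z x| :=
            mul_le_mul_of_nonneg_right h1 (abs_nonneg _)
        _ = |2 * z x * deriv z x| := one_mul _
        _ ≤ _ := h2
  -- integration by parts: ∫ (tanh x * z x ^ 2)' = 0
  have hFi : Integrable (fun x => Real.tanh x * z x ^ 2) := by
    refine hB.mono ?_ (Filter.Eventually.of_forall fun x => ?_)
    · exact ((Real.continuous_sinh.div Real.continuous_cosh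
        (fun x => (Real.cosh_pos x).ne')).congr
        (fun y => (Real.tanh_eq_sinh_div_cosh y).symm)).aestronglyMeasurable.mul
        (hzc.pow 2).aestronglyMeasurable
    · rw [Real.norm_eq_abs, Real.norm_eq_abs, abs_mul,
        abs_of_nonneg (sq_nonneg (z x))]
      nlinarith [my_abs_tanh_le_one x, abs_nonneg (Real.tanh x), sq_nonneg (z x)]
  have hderivF : ∀ x : ℝ, HasDerivAt (fun y => Real.tanh y * z y ^ 2)
      (z x ^ 2 / Real.cosh x ^ 2 + Real.tanh x * (2 * z x * deriv z x)) x := by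
    intro x
    have h1 : HasDerivAt (fun y => z y ^ 2) (2 * z x ^ 1 * deriv z x) x :=
      (hz x).hasDerivAt.pow 2
    have h2 := (my_hasDerivAt_tanh x).mul h1
    exact h2.congr_deriv (by ring)
  have hIBP : ∫ x, (z x ^ 2 / Real.cosh x ^ 2
      + Real.tanh x * (2 * z x * deriv z x)) = 0 :=
    integral_eq_zero_of_hasDerivAt_of_integrable hderivF (hS.add hT) hFi
  have hIT : ∫ x, Real.tanh x * (2 * z x * deriv z x)
      = - ∫ x, z x ^ 2 / Real.cosh x ^ 2 := by
    have := integral_add hS hT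
    rw [hIBP] at this
    linarith
  -- Hardy-type inequality
  set A := ∫ x, deriv z x ^ 2 with hAdef
  set B := ∫ x, z x ^ 2 with hBdef
  set S := ∫ x, z x ^ 2 / Real.cosh x ^ 2 with hSdef
  have hA0 : 0 ≤ A := integral_nonneg fun x => sq_nonneg _
  have hB0 : 0 ≤ B := integral_nonneg fun x => sq_nonneg _
  have hS0 : 0 ≤ S := integral_nonneg fun x => by positivity
  have hsq : Integrable (fun x => (deriv z x + c * Real.tanh x * z x) ^ 2) := by
    have : (fun x => (deriv z x + c * Real.tanh x * z x) ^ 2)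
        = fun x => deriv z x ^ 2 + c ^ 2 * z x ^ 2
          - c ^ 2 * (z x ^ 2 / Real.cosh x ^ 2)
          + c * (Real.tanh x * (2 * z x * deriv z x)) := by
      funext x
      have h2 : z x ^ 2 / Real.cosh x ^ 2 = z x ^ 2 - Real.tanh x ^ 2 * z x ^ 2 := by
        rw [my_tanh_sq]
        have hcx : Real.cosh x ^ 2 ≠ 0 := by positivity
        field_simp; ring
      rw [h2]; ring
    rw [this]
    have hI2 : Integrable (fun x => c ^ 2 * (z x ^ 2 / Real.cosh x ^ 2)) := hS.const_mul _
    have hI4 : Integrable (fun x => c * (Real.tanh x * (2 * z x * deriv z x))) :=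
      hT.const_mul _
    have hBc : Integrable (fun x => c ^ 2 * z x ^ 2) := hB.const_mul _
    exact ((hA.add hBc).sub hI2).add hI4
  have hexpand : ∫ x, (deriv z x + c * Real.tanh x * z x) ^ 2
      = A + c ^ 2 * B - c ^ 2 * S - c * S := by
    have heq : (fun x => (deriv z x + c * Real.tanh x * z x) ^ 2)
        = fun x => deriv z x ^ 2 + c ^ 2 * z x ^ 2
          - c ^ 2 * (z x ^ 2 / Real.cosh x ^ 2)
          + c * (Real.tanh x * (2 * z x * deriv z x)) := by
      funext x
      have h2 : z x ^ 2 / Real.cosh x ^ 2 = z x ^ 2 - Real.tanh x ^ 2 * z x ^ 2 := by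
        rw [my_tanh_sq]
        have hcx : Real.cosh x ^ 2 ≠ 0 := by positivity
        field_simp; ring
      rw [h2]; ring
    have hI2 : Integrable (fun x => c ^ 2 * (z x ^ 2 / Real.cosh x ^ 2)) := hS.const_mul _
    have hI4 : Integrable (fun x => c * (Real.tanh x * (2 * z x * deriv z x))) :=
      hT.const_mul _
    have hBc : Integrable (fun x => c ^ 2 * z x ^ 2) := hB.const_mul _
    have hI1 : Integrable (fun x => deriv z x ^ 2 + c ^ 2 * z x ^ 2) := hA.add hBc
    have hI3 : Integrable (fun x => deriv z x ^ 2 + c ^ 2 * z x ^ 2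
        - c ^ 2 * (z x ^ 2 / Real.cosh x ^ 2)) := hI1.sub hI2
    rw [heq, integral_add hI3 hI4, integral_sub hI1 hI2,
      integral_add hA hBc, MeasureTheory.integral_const_mul, MeasureTheory.integral_const_mul,
      MeasureTheory.integral_const_mul, hIT]
    ring
  have hardy : (c + c ^ 2) * S ≤ A + c ^ 2 * B := by
    have h0 : 0 ≤ ∫ x, (deriv z x + c * Real.tanh x * z x) ^ 2 :=
      integral_nonneg fun x => sq_nonneg _
    rw [hexpand] at h0
    nlinarith
  -- rewrite the target integrals
  have hQ2 : ∀ x : ℝ, ω * Q x ^ 2 * z x ^ 2 = 2 * ω * (z x ^ 2 / Real.cosh x ^ 2) := by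
    intro x
    have : Q x ^ 2 = 2 / Real.cosh x ^ 2 := by
      rw [Q, div_pow, Real.sq_sqrt (by norm_num : (2:ℝ) ≥ 0)]
    rw [this]; ring
  have hLHS : (∫ x : ℝ, ((deriv z x) ^ 2 + c ^ 2 * (z x) ^ 2 - ω * (Q x) ^ 2 * (z x) ^ 2))
      = A + c ^ 2 * B - 2 * ω * S := by
    have heq : (fun x => (deriv z x) ^ 2 + c ^ 2 * (z x) ^ 2 - ω * (Q x) ^ 2 * (z x) ^ 2)
        = fun x => (deriv z x ^ 2 + c ^ 2 * z x ^ 2)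
          - 2 * ω * (z x ^ 2 / Real.cosh x ^ 2) := by
      funext x
      rw [hQ2 x]
    have hI2 : Integrable (fun x => 2 * ω * (z x ^ 2 / Real.cosh x ^ 2)) := hS.const_mul _
    have hBc : Integrable (fun x => c ^ 2 * z x ^ 2) := hB.const_mul _
    have hI1 : Integrable (fun x => deriv z x ^ 2 + c ^ 2 * z x ^ 2) := hA.add hBc
    rw [heq, integral_sub hI1 hI2, integral_add hA hBc, MeasureTheory.integral_const_mul,
      MeasureTheory.integral_const_mul]
  have hRHS : (∫ x : ℝ, ((z x) ^ 2 + (deriv z x) ^ 2)) = B + A := by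
    rw [integral_add hB hA]
  rw [ge_iff_le, hLHS, hRHS, div_mul_eq_mul_div, div_le_iff₀ hc1']
  nlinarith [mul_le_mul_of_nonneg_left hardy (by linarith : (0:ℝ) ≤ 2 * ω),
    mul_nonneg (mul_nonneg hK.le hA0) (sub_nonneg.2 (by nlinarith : c ^ 2 ≤ 1)),
    mul_nonneg hS0 hK.le]
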